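/- Let N be a norm on ℝ² and let p, q, w, u ∈ ℝ² with N(w) = N(u) = 1. Define h : ℝ² → ℝ by h(z) := N((p + z₁·w) − (q + z₂·u)). Then there exists a line ℓ ⊆ ℝ² of positive slope (i.e., ℓ = {z₀ + λ·d : λ ∈ ℝ} for some z₀ ∈ ℝ² and d ∈ ℝ² with d₁ > 0 and d₂ > 0) such that every z ∈ ℓ is a sink: the function t ↦ h(z₁ + t, z₂ − t) is non-increasing on (−∞, 0] and non-decreasing on [0, ∞). (Such a line ℓ is called a valley of positive slope.) -/

import Mathlib

/-- `N : ℝ × ℝ → ℝ` is a norm on `ℝ²`. -/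
def IsNorm (N : ℝ × ℝ → ℝ) : Prop :=
  (∀ z : ℝ × ℝ, 0 ≤ N z) ∧
  (∀ z : ℝ × ℝ, N z = 0 ↔ z = 0) ∧
  (∀ (c : ℝ) (z : ℝ × ℝ), N (c • z) = |c| * N z) ∧
  (∀ z w : ℝ × ℝ, N (z + w) ≤ N z + N w)

namespace ValleyAux

variable {N : ℝ × ℝ → ℝ}

lemma norm_zero (hN : IsNorm N) : N 0 = 0 := (hN.2.1 0).mpr rfl

lemma norm_neg (hN : IsNorm N) (z : ℝ × ℝ) : N (-z) = N z := by
  have := hN.2.2.1 (-1) z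
  simpa using this

lemma combo (hN : IsNorm N) (a v : ℝ × ℝ) (s t θ : ℝ) (h0 : 0 ≤ θ) (h1 : θ ≤ 1) :
    N (a + (θ*s + (1-θ)*t)•v) ≤ θ * N (a + s•v) + (1-θ) * N (a + t•v) := by
  have he : a + (θ*s + (1-θ)*t)•v = θ•(a + s•v) + (1-θ)•(a + t•v) := by module
  rw [he]
  calc N (θ•(a + s•v) + (1-θ)•(a + t•v))
      ≤ N (θ•(a + s•v)) + N ((1-θ)•(a + t•v)) := hN.2.2.2 _ _
    _ = θ * N (a+s•v) + (1-θ)*N (a+t•v) := by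
        rw [hN.2.2.1, hN.2.2.1, abs_of_nonneg h0, abs_of_nonneg (by linarith)]

lemma cont (hN : IsNorm N) (a v : ℝ × ℝ) : Continuous fun s : ℝ => N (a + s•v) := by
  have key : ∀ s t : ℝ, N (a + s•v) - N (a + t•v) ≤ |s - t| * N v := by
    intro s t
    have he : a + s•v = (a + t•v) + (s-t)•v := by module
    have h2 := hN.2.2.2 (a + t•v) ((s-t)•v)
    rw [hN.2.2.1] at h2
    rw [he]
    linarith
  refine (LipschitzWith.of_dist_le_mul (K := ⟨N v, hN.1 v⟩) ?_).continuous
  intro s t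
  rw [Real.dist_eq, Real.dist_eq]
  have h1 := key s t
  have h2 := key t s
  rw [abs_sub_comm t s] at h2
  have habs : |N (a+s•v) - N (a+t•v)| ≤ |s-t| * N v := abs_sub_le_iff.mpr ⟨h1, h2⟩
  calc |N (a+s•v) - N (a+t•v)| ≤ |s-t| * N v := habs
    _ = (⟨N v, hN.1 v⟩ : NNReal) * |s - t| := by rw [mul_comm]

lemma exists_global_min (hN : IsNorm N) (a v : ℝ × ℝ) (hv : N v ≠ 0) :
    ∃ s₀ : ℝ, ∀ s : ℝ, N (a + s₀•v) ≤ N (a + s•v) := by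
  have hvpos : 0 < N v := lt_of_le_of_ne (hN.1 v) (Ne.symm hv)
  have hRpos : 0 < 2 * N a / N v + 1 := by
    have h0 : 0 ≤ 2 * N a / N v := div_nonneg (by linarith [hN.1 a]) hvpos.le
    linarith
  set R := 2 * N a / N v + 1 with hR
  obtain ⟨s₀, hs₀mem, hs₀⟩ := (isCompact_Icc (a := -R) (b := R)).exists_isMinOn
    ⟨0, by constructor <;> linarith⟩ ((cont hN a v).continuousOn)
  rw [isMinOn_iff] at hs₀
  refine ⟨s₀, fun s => ?_⟩
  by_cases hs : s ∈ Set.Icc (-R) R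
  · exact hs₀ s hs
  · have habs : R < |s| := by
      simp only [Set.mem_Icc, not_and_or, not_le] at hs
      rcases hs with hlt | hlt
      · rw [abs_of_neg (by linarith)]; linarith
      · rw [abs_of_pos (by linarith)]; linarith
    have h1 : |s| * N v ≤ N (a + s•v) + N a := by
      have he : s•v = (a + s•v) + (-a) := by module
      calc |s| * N v = N (s•v) := (hN.2.2.1 s v).symm
        _ = N ((a + s•v) + (-a)) := congrArg N he
        _ ≤ N (a + s•v) + N (-a) := hN.2.2.2 _ _
        _ = N (a + s•v) + N a := by rw [norm_neg hN]
    have h0 : N (a + s₀•v) ≤ N (a + (0:ℝ)•v) := hs₀ 0 ⟨by linarith, by linarith⟩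
    have h00 : N (a + (0:ℝ)•v) = N a := by rw [zero_smul, add_zero]
    have hm : R * N v = 2 * N a + N v := by rw [hR]; field_simp
    nlinarith [mul_lt_mul_of_pos_right habs hvpos, hN.1 a]

lemma keyMono (hN : IsNorm N) (a v : ℝ × ℝ) (hmin : ∀ t : ℝ, N a ≤ N (a + t•v)) :
    ∀ s t : ℝ, 0 ≤ s → s ≤ t → N (a + s•v) ≤ N (a + t•v) := by
  intro s t hs hst
  rcases eq_or_lt_of_le (hs.trans hst) with hteq | ht
  · have hs0 : s = 0 := le_antisymm (hteq ▸ hst) hs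
    rw [hs0, ← hteq]
  · set θ := s / t with hθ
    have hθ0 : 0 ≤ θ := div_nonneg hs ht.le
    have hθ1 : θ ≤ 1 := (div_le_one ht).mpr hst
    have hts : θ * t = s := div_mul_cancel₀ s ht.ne'
    have hc := combo hN a v t 0 θ hθ0 hθ1
    rw [mul_zero, add_zero, hts] at hc
    have h00 : N (a + (0:ℝ)•v) = N a := by rw [zero_smul, add_zero]
    nlinarith [hmin t]

lemma keyAnti (hN : IsNorm N) (a v : ℝ × ℝ) (hmin : ∀ t : ℝ, N a ≤ N (a + t•v)) :
    ∀ s t : ℝ, s ≤ t → t ≤ 0 → N (a + t•v) ≤ N (a + s•v) := by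
  intro s t hst ht
  have hmin' : ∀ r : ℝ, N a ≤ N (a + r•(-v)) := by
    intro r
    have e : a + r•(-v) = a + (-r)•v := by module
    rw [e]; exact hmin (-r)
  have hk := keyMono hN a (-v) hmin' (-t) (-s) (by linarith) (by linarith)
  have e1 : a + (-t)•(-v) = a + t•v := by module
  have e2 : a + (-s)•(-v) = a + s•v := by module
  rwa [e1, e2] at hk

lemma cross_mono (hN : IsNorm N) (p q w u : ℝ × ℝ) (h : ℝ × ℝ → ℝ)
    (hh : ∀ z : ℝ × ℝ, h z = N ((p + z.1 • w) - (q + z.2 • u)))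
    (z a : ℝ × ℝ)
    (ha : (p + z.1 • w) - (q + z.2 • u) = a)
    (hmin : ∀ t : ℝ, N a ≤ N (a + t•(w+u))) :
    AntitoneOn (fun t => h (z.1 + t, z.2 - t)) (Set.Iic 0) ∧
    MonotoneOn (fun t => h (z.1 + t, z.2 - t)) (Set.Ici 0) := by
  have key : ∀ t : ℝ, h (z.1 + t, z.2 - t) = N (a + t•(w+u)) := by
    intro t
    rw [hh]
    congr 1
    have he : (p + (z.1 + t) • w) - (q + (z.2 - t) • u)
        = ((p + z.1 • w) - (q + z.2 • u)) + t•(w+u) := by module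
    rw [show ((z.1 + t, z.2 - t) : ℝ × ℝ).1 = z.1 + t from rfl,
        show ((z.1 + t, z.2 - t) : ℝ × ℝ).2 = z.2 - t from rfl, he, ha]
  constructor
  · intro s hs t ht hst
    simp only [key]
    exact keyAnti hN a (w+u) hmin s t hst ht
  · intro s hs t ht hst
    simp only [key]
    exact keyMono hN a (w+u) hmin s t hs hst

end ValleyAux


theorem exists_valley_of_positive_slope
    (N : ℝ × ℝ → ℝ) (hN : IsNorm N)
    (p q w u : ℝ × ℝ) (hw : N w = 1) (hu : N u = 1)
    (h : ℝ × ℝ → ℝ)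
    (hh : ∀ z : ℝ × ℝ, h z = N ((p + z.1 • w) - (q + z.2 • u))) :
    ∃ z₀ d : ℝ × ℝ, 0 < d.1 ∧ 0 < d.2 ∧
      ∀ lam : ℝ,
        AntitoneOn (fun t => h ((z₀ + lam • d).1 + t, (z₀ + lam • d).2 - t)) (Set.Iic 0) ∧
        MonotoneOn (fun t => h ((z₀ + lam • d).1 + t, (z₀ + lam • d).2 - t)) (Set.Ici 0) := by
  classical
  by_cases hD : w.1 * u.2 - w.2 * u.1 ≠ 0
  · -- w, u linearly independent
    have hvne : N (w + u) ≠ 0 := by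
      intro h0
      have hv0 : w + u = 0 := (hN.2.1 (w+u)).mp h0
      have hu' : u = -w := by
        have := hv0
        rw [add_eq_zero_iff_eq_neg] at this
        -- this : w = -u
        rw [this]; simp
      apply hD
      rw [hu']; simp; ring
    obtain ⟨s₀, hs₀⟩ := ValleyAux.exists_global_min hN (w - u) (w + u) hvne
    have g1 : N (w - u + (1:ℝ)•(w+u)) = 2 := by
      have e : w - u + (1:ℝ)•(w+u) = (2:ℝ)•w := by module
      rw [e, hN.2.2.1, hw]; norm_num
    have gm1 : N (w - u + (-1:ℝ)•(w+u)) = 2 := by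
      have e : w - u + (-1:ℝ)•(w+u) = (-2:ℝ)•u := by module
      rw [e, hN.2.2.1, hu]; norm_num
    have g0le : N (w - u + (0:ℝ)•(w+u)) ≤ 2 := by
      have e : w - u + (0:ℝ)•(w+u) = w + (-u) := by module
      rw [e]
      calc N (w + -u) ≤ N w + N (-u) := hN.2.2.2 _ _
        _ = 2 := by rw [ValleyAux.norm_neg hN, hw, hu]; norm_num
    obtain ⟨s₁, hs₁l, hs₁r, hs₁min⟩ :
        ∃ s₁ : ℝ, -1 < s₁ ∧ s₁ < 1 ∧
          ∀ s : ℝ, N (w - u + s₁•(w+u)) ≤ N (w - u + s•(w+u)) := by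
      by_cases hc : N (w - u + s₀•(w+u)) < 2
      · refine ⟨s₀, ?_, ?_, hs₀⟩
        · by_contra hle
          push_neg at hle
          have hs₀neg : s₀ < 0 := by linarith
          have hs0ne : s₀ ≠ 0 := ne_of_lt hs₀neg
          have hθ0 : 0 < 1 / (-s₀) := div_pos one_pos (by linarith)
          have hθ1 : 1 / (-s₀) ≤ 1 := by
            rw [div_le_one (by linarith)]; linarith
          have hcomb := ValleyAux.combo hN (w - u) (w + u) s₀ 0 (1 / (-s₀)) hθ0.le hθ1
          have hts : (1 / (-s₀)) * s₀ + (1 - 1 / (-s₀)) * 0 = -1 := by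
            rw [mul_zero, add_zero, one_div, ← div_eq_inv_mul, div_neg, div_self hs0ne]
          rw [hts, gm1] at hcomb
          nlinarith [mul_pos hθ0 (by linarith : (0:ℝ) < 2 - N (w - u + s₀•(w+u))),
            mul_nonneg (by linarith : (0:ℝ) ≤ 1 - 1 / (-s₀))
              (by linarith [g0le] : (0:ℝ) ≤ 2 - N (w - u + (0:ℝ)•(w+u)))]
        · by_contra hle
          push_neg at hle
          have hs₀pos : 0 < s₀ := by linarith
          have hs0ne : s₀ ≠ 0 := ne_of_gt hs₀pos
          have hθ0 : 0 < 1 / s₀ := div_pos one_pos hs₀pos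
          have hθ1 : 1 / s₀ ≤ 1 := by
            rw [div_le_one hs₀pos]; linarith
          have hcomb := ValleyAux.combo hN (w - u) (w + u) s₀ 0 (1 / s₀) hθ0.le hθ1
          have hts : (1 / s₀) * s₀ + (1 - 1 / s₀) * 0 = 1 := by
            rw [mul_zero, add_zero, one_div, ← div_eq_inv_mul, div_self hs0ne]
          rw [hts, g1] at hcomb
          nlinarith [mul_pos hθ0 (by linarith : (0:ℝ) < 2 - N (w - u + s₀•(w+u))),
            mul_nonneg (by linarith : (0:ℝ) ≤ 1 - 1 / s₀)
              (by linarith [g0le] : (0:ℝ) ≤ 2 - N (w - u + (0:ℝ)•(w+u)))]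
      · push_neg at hc
        refine ⟨0, by norm_num, by norm_num, fun s => ?_⟩
        calc N (w - u + (0:ℝ)•(w+u)) ≤ 2 := g0le
          _ ≤ N (w - u + s₀•(w+u)) := hc
          _ ≤ N (w - u + s•(w+u)) := hs₀ s
    -- the valley line
    set z₀ : ℝ × ℝ := (((q-p).1 * u.2 - (q-p).2 * u.1) / (w.1 * u.2 - w.2 * u.1),
             (w.2 * (q-p).1 - w.1 * (q-p).2) / (w.1 * u.2 - w.2 * u.1)) with hz₀def
    have hz₀ : p - q + z₀.1 • w - z₀.2 • u = 0 := by
      rw [hz₀def]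
      rw [Prod.ext_iff]
      constructor <;>
      · simp only [Prod.fst_add, Prod.snd_add, Prod.fst_sub, Prod.snd_sub,
          Prod.smul_fst, Prod.smul_snd, smul_eq_mul, Prod.fst_zero, Prod.snd_zero]
        have hD' : u.2 * w.1 - u.1 * w.2 ≠ 0 := by intro h0; apply hD; linarith
        field_simp
        ring
    refine ⟨z₀, (1 + s₁, 1 - s₁), ?_, ?_, fun lam => ?_⟩
    · show (0:ℝ) < 1 + s₁; linarith
    · show (0:ℝ) < 1 - s₁; linarith
    apply ValleyAux.cross_mono hN p q w u h hh _ (lam • (w - u + s₁•(w+u)))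
    · -- ha
      have e : (p + ((z₀ + lam • ((1 + s₁, 1 - s₁) : ℝ × ℝ)).1) • w)
            - (q + ((z₀ + lam • ((1 + s₁, 1 - s₁) : ℝ × ℝ)).2) • u)
          = (p - q + z₀.1 • w - z₀.2 • u) + lam • (w - u + s₁•(w+u)) := by
        simp only [Prod.fst_add, Prod.snd_add, Prod.smul_fst, Prod.smul_snd, smul_eq_mul]
        module
      rw [e, hz₀, zero_add]
    · -- hmin
      intro t
      by_cases hlam : lam = 0
      · subst hlam
        simp only [zero_smul, zero_add]
        rw [ValleyAux.norm_zero hN]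
        exact hN.1 _
      · have ht' : lam * (t / lam) = t := by field_simp
        have e : lam • (w - u + s₁•(w+u)) + t • (w + u)
            = lam • (w - u + (s₁ + t/lam) • (w + u)) := by
          calc lam • (w - u + s₁•(w+u)) + t • (w + u)
              = lam • (w - u + s₁•(w+u)) + (lam * (t/lam)) • (w + u) := by rw [ht']
            _ = lam • (w - u + (s₁ + t/lam) • (w + u)) := by module
        rw [e, hN.2.2.1, hN.2.2.1]
        exact mul_le_mul_of_nonneg_left (hs₁min (s₁ + t/lam)) (abs_nonneg lam)
  · -- w, u parallel
    push_neg at hD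
    have hwne : w ≠ 0 := by
      intro h0
      rw [h0, ValleyAux.norm_zero hN] at hw
      norm_num at hw
    obtain ⟨c, hc⟩ : ∃ c : ℝ, u = c • w := by
      by_cases hw1 : w.1 = 0
      · have hw2 : w.2 ≠ 0 := by
          intro h2
          exact hwne (Prod.ext hw1 h2)
        have hu1 : u.1 = 0 := by
          have hh1 : w.2 * u.1 = 0 := by
            rw [hw1] at hD; linarith
          rcases mul_eq_zero.mp hh1 with h' | h'
          · exact absurd h' hw2
          · exact h'
        refine ⟨u.2 / w.2, Prod.ext ?_ ?_⟩
        · simp [hu1, hw1]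
        · simp only [Prod.smul_snd, smul_eq_mul]
          field_simp
      · refine ⟨u.1 / w.1, Prod.ext ?_ ?_⟩
        · simp only [Prod.smul_fst, smul_eq_mul]
          field_simp
        · simp only [Prod.smul_snd, smul_eq_mul]
          field_simp
          nlinarith [hD]
    have habs : |c| = 1 := by
      have hx := hN.2.2.1 c w
      rw [← hc, hu, hw, mul_one] at hx
      exact hx.symm
    rcases (abs_eq (by norm_num : (0:ℝ) ≤ 1)).mp habs with h1 | hm1
    · -- c = 1 : u = w
      have hcu : u = w := by rw [hc, h1, one_smul]
      obtain ⟨σ₀, hσ₀⟩ := ValleyAux.exists_global_min hN (p - q) w (by rw [hw]; norm_num)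
      refine ⟨(σ₀, 0), (1, 1), one_pos, one_pos, fun lam => ?_⟩
      apply ValleyAux.cross_mono hN p q w u h hh _ (p - q + σ₀ • w)
      · rw [hcu]
        simp only [Prod.fst_add, Prod.snd_add, Prod.smul_fst, Prod.smul_snd, smul_eq_mul]
        module
      · intro t
        have e : (p - q + σ₀ • w) + t • (w + u) = p - q + (σ₀ + 2*t) • w := by
          rw [hcu]; module
        rw [e]
        exact hσ₀ (σ₀ + 2*t)
    · -- c = -1 : u = -w
      have hcu : u = -w := by rw [hc, hm1]; simp
      refine ⟨(0, 0), (1, 1), one_pos, one_pos, fun lam => ?_⟩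
      apply ValleyAux.cross_mono hN p q w u h hh _ (p - q + (2*lam) • w)
      · rw [hcu]
        simp only [Prod.fst_add, Prod.snd_add, Prod.smul_fst, Prod.smul_snd, smul_eq_mul]
        module
      · intro t
        have e : (p - q + (2*lam) • w) + t • (w + u) = p - q + (2*lam) • w := by
          rw [hcu]; module
        rw [e]
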